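/- Fix n ≥ 2 and N ∈ ℕ. The lowest weight space of level N, namely ker(Δ^{(n)}a⁻) ∩ span{h_{m₁} ⊗ ⋯ ⊗ h_{m_n} : m₁ + ⋯ + m_n = N}, equals span{O₁^{j₁} O₂^{j₂} ⋯ O_{n−1}^{j_{n−1}} v₀ : j_i ∈ ℕ, j₁ + ⋯ + j_{n−1} = N}, and its dimension is the binomial coefficient binom(n+N−2, n−2). -/

import Mathlib

noncomputable section
noncomputable section

/-- The `q`-number `[γ]_q = (q^γ - q^(-γ))/(q - q⁻¹)`. -/
def qnum (q γ : ℝ) : ℝ := (q ^ γ - q ^ (-γ)) / (q - q⁻¹)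

/-- The representation space `H^{(γ,c)}`: finitely supported functions `ℕ → ℂ`. -/
abbrev HO : Type := ℕ →₀ ℂ

/-- The basis vector `h_m`. -/
def hv (m : ℕ) : HO := Finsupp.single m 1

/-- The lowering operator `a⁻ h_m = [γ]_q^{1/2} m^{1/2} h_{m-1}` (so `a⁻ h_0 = 0`). -/
def aMinus (q γ : ℝ) : HO →ₗ[ℂ] HO :=
  Finsupp.lift HO ℂ ℕ fun m => ((Real.sqrt (qnum q γ) * Real.sqrt m : ℝ) : ℂ) • hv (m - 1)

/-- The raising operator `a⁺ h_m = [γ]_q^{1/2} (m+1)^{1/2} h_{m+1}`. -/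
def aPlus (q γ : ℝ) : HO →ₗ[ℂ] HO :=
  Finsupp.lift HO ℂ ℕ fun m => ((Real.sqrt (qnum q γ) * Real.sqrt (m + 1) : ℝ) : ℂ) • hv (m + 1)

/-- The operator `ε h_m = (m + c) h_m`. -/
def epsOp (c : ℝ) : HO →ₗ[ℂ] HO :=
  Finsupp.lift HO ℂ ℕ fun m => (((m : ℝ) + c : ℝ) : ℂ) • hv m

/-- The model of the `n`-fold tensor power `H^{(γ₁,c₁)} ⊗ ⋯ ⊗ H^{(γ_n,c_n)}`: finitely
supported functions on multi-indices, with `h_{m₁} ⊗ ⋯ ⊗ h_{m_n}` the standard basis. -/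
abbrev HN (n : ℕ) : Type := (Fin n → ℕ) →₀ ℂ

/-- The basis vector `h_{m₁} ⊗ ⋯ ⊗ h_{m_n}`. -/
def hN {n : ℕ} (m : Fin n → ℕ) : HN n := Finsupp.single m 1

/-- The iterated coproduct action of `a⁺`:
`Δ^{(n)}a⁺ = Σᵢ q^{−(γ₁+⋯+γ_{i−1})/2} q^{(γ_{i+1}+⋯+γ_n)/2} (1^{⊗ i−1} ⊗ a⁺ ⊗ 1^{⊗ n−i})`. -/
def ΔNaPlus (q : ℝ) {n : ℕ} (γ : Fin n → ℝ) : HN n →ₗ[ℂ] HN n :=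
  Finsupp.lift (HN n) ℂ (Fin n → ℕ) fun m =>
    ∑ i : Fin n,
      ((q ^ (-(∑ j ∈ Finset.Iio i, γ j) / 2) * q ^ ((∑ j ∈ Finset.Ioi i, γ j) / 2) *
          (Real.sqrt (qnum q (γ i)) * Real.sqrt (m i + 1)) : ℝ) : ℂ) •
        hN (Function.update m i (m i + 1))

/-- The iterated coproduct action of `a⁻`:
`Δ^{(n)}a⁻ = Σᵢ q^{−(γ₁+⋯+γ_{i−1})/2} q^{(γ_{i+1}+⋯+γ_n)/2} (1^{⊗ i−1} ⊗ a⁻ ⊗ 1^{⊗ n−i})`. -/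
def ΔNaMinus (q : ℝ) {n : ℕ} (γ : Fin n → ℝ) : HN n →ₗ[ℂ] HN n :=
  Finsupp.lift (HN n) ℂ (Fin n → ℕ) fun m =>
    ∑ i : Fin n,
      ((q ^ (-(∑ j ∈ Finset.Iio i, γ j) / 2) * q ^ ((∑ j ∈ Finset.Ioi i, γ j) / 2) *
          (Real.sqrt (qnum q (γ i)) * Real.sqrt (m i)) : ℝ) : ℂ) •
        hN (Function.update m i (m i - 1))

/-- The iterated coproduct action of `ε`: `Δ^{(n)}ε = Σᵢ 1^{⊗ i−1} ⊗ ε ⊗ 1^{⊗ n−i}`. -/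
def ΔNeps {n : ℕ} (c : Fin n → ℝ) : HN n →ₗ[ℂ] HN n :=
  Finsupp.lift (HN n) ℂ (Fin n → ℕ) fun m =>
    ((∑ i : Fin n, ((m i : ℝ) + c i) : ℝ) : ℂ) • hN m

/-- The `k`-th tensor slot, for `k = 1, …, n−1` (0-indexed). -/
def pos1 {n : ℕ} (k : Fin (n - 1)) : Fin n := ⟨k.1, by have := k.isLt; omega⟩

/-- The `(k+1)`-st tensor slot, for `k = 1, …, n−1` (0-indexed). -/
def pos2 {n : ℕ} (k : Fin (n - 1)) : Fin n := ⟨k.1 + 1, by have := k.isLt; omega⟩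

/-- The ladder operator `O_k = 1^{⊗ k−1} ⊗ O_{(γ_k,γ_{k+1})} ⊗ 1^{⊗ n−k−1}`, where
`O_{(γ,γ')} = q^{−γ/2}[γ]_q^{−1/2}[γ']_q^{1/2}(a⁺ ⊗ 1) − q^{γ'/2}[γ]_q^{1/2}[γ']_q^{−1/2}(1 ⊗ a⁺)`. -/
def ON (q : ℝ) {n : ℕ} (γ : Fin n → ℝ) (k : Fin (n - 1)) : HN n →ₗ[ℂ] HN n :=
  Finsupp.lift (HN n) ℂ (Fin n → ℕ) fun m =>
    ((q ^ (-(γ (pos1 k)) / 2) * (Real.sqrt (qnum q (γ (pos1 k))))⁻¹ *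
        Real.sqrt (qnum q (γ (pos2 k))) *
        (Real.sqrt (qnum q (γ (pos1 k))) * Real.sqrt (m (pos1 k) + 1)) : ℝ) : ℂ) •
        hN (Function.update m (pos1 k) (m (pos1 k) + 1)) -
      ((q ^ (γ (pos2 k) / 2) * Real.sqrt (qnum q (γ (pos1 k))) *
        (Real.sqrt (qnum q (γ (pos2 k))))⁻¹ *
        (Real.sqrt (qnum q (γ (pos2 k))) * Real.sqrt (m (pos2 k) + 1)) : ℝ) : ℂ) •
        hN (Function.update m (pos2 k) (m (pos2 k) + 1))

/-- The monomial `O₁^{j₁} O₂^{j₂} ⋯ O_{n−1}^{j_{n−1}}` (a product of commuting operators). -/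
def Omono (q : ℝ) {n : ℕ} (γ : Fin n → ℝ) (jv : Fin (n - 1) → ℕ) : HN n →ₗ[ℂ] HN n :=
  (List.ofFn fun k : Fin (n - 1) => (ON q γ k) ^ (jv k)).prod



noncomputable section
open Finsupp

namespace St12

lemma qnum_pos {q g : ℝ} (hq0 : 0 < q) (hq1 : q < 1) (hg : 0 < g) : 0 < qnum q g := by
  unfold qnum
  apply div_pos_of_neg_of_neg
  · have h1 : q ^ g < q ^ (-g) := Real.rpow_lt_rpow_of_exponent_gt hq0 hq1 (by linarith)
    linarith
  · have h2 : (1:ℝ) < q⁻¹ := (one_lt_inv₀ hq0).mpr hq1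
    linarith

lemma sqrt_qnum_pos {q g : ℝ} (hq0 : 0 < q) (hq1 : q < 1) (hg : 0 < g) :
    0 < Real.sqrt (qnum q g) := Real.sqrt_pos.mpr (qnum_pos hq0 hq1 hg)

lemma liftN_single {n : ℕ} (F : (Fin n → ℕ) → HN n) (m : Fin n → ℕ) (b : ℂ) :
    Finsupp.lift (HN n) ℂ (Fin n → ℕ) F (Finsupp.single m b) = b • F m := by
  simp [Finsupp.lift_apply, Finsupp.sum_single_index]

lemma liftN_hN {n : ℕ} (F : (Fin n → ℕ) → HN n) (m : Fin n → ℕ) :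
    Finsupp.lift (HN n) ℂ (Fin n → ℕ) F (hN m) = F m := by
  rw [hN, liftN_single, one_smul]

/-- elementary raising operator at slot `i` -/
def R {n : ℕ} (i : Fin n) : HN n →ₗ[ℂ] HN n :=
  Finsupp.lift (HN n) ℂ (Fin n → ℕ) fun m =>
    ((Real.sqrt (m i + 1) : ℝ) : ℂ) • hN (Function.update m i (m i + 1))

/-- elementary lowering operator at slot `i` -/
def L {n : ℕ} (i : Fin n) : HN n →ₗ[ℂ] HN n :=
  Finsupp.lift (HN n) ℂ (Fin n → ℕ) fun m =>
    ((Real.sqrt (m i) : ℝ) : ℂ) • hN (Function.update m i (m i - 1))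

lemma R_hN {n : ℕ} (i : Fin n) (m : Fin n → ℕ) :
    R i (hN m) = ((Real.sqrt (m i + 1) : ℝ) : ℂ) • hN (Function.update m i (m i + 1)) :=
  liftN_hN _ m

lemma L_hN {n : ℕ} (i : Fin n) (m : Fin n → ℕ) :
    L i (hN m) = ((Real.sqrt (m i) : ℝ) : ℂ) • hN (Function.update m i (m i - 1)) :=
  liftN_hN _ m

end St12

noncomputable section
open Finsupp

namespace St12

variable {n : ℕ}

/-- coefficient of `L i` in `ΔNaMinus` -/
def cγ (q : ℝ) (γ : Fin n → ℝ) (i : Fin n) : ℝ :=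
  q ^ (-(∑ j ∈ Finset.Iio i, γ j) / 2) * q ^ ((∑ j ∈ Finset.Ioi i, γ j) / 2) *
    Real.sqrt (qnum q (γ i))

/-- coefficient of `R (pos1 k)` in `ON` -/
def aco (q : ℝ) (γ : Fin n → ℝ) (k : Fin (n-1)) : ℝ :=
  q ^ (-(γ (pos1 k)) / 2) * (Real.sqrt (qnum q (γ (pos1 k))))⁻¹ *
    Real.sqrt (qnum q (γ (pos2 k))) * Real.sqrt (qnum q (γ (pos1 k)))

/-- coefficient of `R (pos2 k)` in `ON` -/
def bco (q : ℝ) (γ : Fin n → ℝ) (k : Fin (n-1)) : ℝ :=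
  q ^ (γ (pos2 k) / 2) * Real.sqrt (qnum q (γ (pos1 k))) *
    (Real.sqrt (qnum q (γ (pos2 k))))⁻¹ * Real.sqrt (qnum q (γ (pos2 k)))

lemma ΔNaMinus_eq (q : ℝ) (γ : Fin n → ℝ) :
    ΔNaMinus q γ = ∑ i : Fin n, (cγ q γ i : ℂ) • L i := by
  apply Finsupp.lhom_ext
  intro m b
  have h1 : (Finsupp.single m b : HN n) = b • hN m := by
    rw [hN, Finsupp.smul_single, smul_eq_mul, mul_one]
  rw [h1, map_smul, map_smul]
  congr 1
  rw [ΔNaMinus, liftN_hN, LinearMap.sum_apply]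
  refine Finset.sum_congr rfl fun i _ => ?_
  rw [LinearMap.smul_apply, L_hN, smul_smul, cγ]
  push_cast
  ring_nf

lemma ON_eq (q : ℝ) (γ : Fin n → ℝ) (k : Fin (n-1)) :
    ON q γ k = (aco q γ k : ℂ) • R (pos1 k) - (bco q γ k : ℂ) • R (pos2 k) := by
  apply Finsupp.lhom_ext
  intro m b
  have h1 : (Finsupp.single m b : HN n) = b • hN m := by
    rw [hN, Finsupp.smul_single, smul_eq_mul, mul_one]
  rw [h1, map_smul, map_smul]
  congr 1
  rw [ON, liftN_hN, LinearMap.sub_apply, LinearMap.smul_apply, LinearMap.smul_apply,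
    R_hN, R_hN, smul_smul, smul_smul, aco, bco]
  push_cast
  ring_nf

lemma LR_comm (i j : Fin n) (hij : i ≠ j) : L i ∘ₗ R j = R j ∘ₗ L i := by
  apply Finsupp.lhom_ext
  intro m b
  have h1 : (Finsupp.single m b : HN n) = b • hN m := by
    rw [hN, Finsupp.smul_single, smul_eq_mul, mul_one]
  rw [h1, map_smul, map_smul]
  congr 1
  rw [LinearMap.comp_apply, LinearMap.comp_apply, R_hN, L_hN, map_smul, map_smul,
    L_hN, R_hN]
  rw [Function.update_of_ne hij.symm, Function.update_of_ne hij,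
    Function.update_comm hij.symm, smul_smul, smul_smul, mul_comm]

lemma LR_comm_self (i : Fin n) :
    L i ∘ₗ R i = R i ∘ₗ L i + LinearMap.id := by
  apply Finsupp.lhom_ext
  intro m b
  have h1 : (Finsupp.single m b : HN n) = b • hN m := by
    rw [hN, Finsupp.smul_single, smul_eq_mul, mul_one]
  rw [h1, map_smul, map_smul]
  congr 1
  rw [LinearMap.comp_apply, LinearMap.add_apply, LinearMap.comp_apply,
    R_hN, L_hN, map_smul, map_smul, L_hN, R_hN, LinearMap.id_apply]
  rw [Function.update_self]
  rcases Nat.eq_zero_or_pos (m i) with h0 | hpos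
  · simp only [h0, Nat.cast_zero, Real.sqrt_zero, Complex.ofReal_zero, zero_smul, smul_zero,
      zero_add]
    have : Function.update (Function.update m i (0 + 1)) i (0 + 1 - 1) = m := by
      funext j
      rcases eq_or_ne j i with rfl | hne
      · simp [h0]
      · simp [Function.update_of_ne hne]
    rw [this]
    norm_num
  · have hm1 : Function.update (Function.update m i (m i + 1)) i (m i + 1 - 1) = m := by
      funext j
      rcases eq_or_ne j i with rfl | hne
      · simp
      · simp [Function.update_of_ne hne]
    have hm2 : Function.update m i (m i - 1) i = m i - 1 := Function.update_self _ _ _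
    have hm3 : Function.update (Function.update m i (m i - 1)) i (m i - 1 + 1) = m := by
      funext j
      rcases eq_or_ne j i with rfl | hne
      · simp only [Function.update_self]
        omega
      · simp [Function.update_of_ne hne]
    have hmi : m i - 1 + 1 = m i := by omega
    have c1 : ((m i : ℝ) + 1) = ((m i + 1 : ℕ) : ℝ) := by push_cast; ring
    have c2 : ((m i - 1 : ℕ) : ℝ) + 1 = ((m i : ℕ) : ℝ) := by
      exact_mod_cast congrArg (Nat.cast : ℕ → ℝ) hmi
    rw [hm1, hm2, hm3, c1, c2, smul_smul, smul_smul]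
    have s1 : Real.sqrt ((m i + 1 : ℕ) : ℝ) * Real.sqrt ((m i + 1 : ℕ) : ℝ)
        = ((m i + 1 : ℕ) : ℝ) := Real.mul_self_sqrt (by positivity)
    have s2 : Real.sqrt ((m i : ℕ) : ℝ) * Real.sqrt ((m i : ℕ) : ℝ)
        = ((m i : ℕ) : ℝ) := Real.mul_self_sqrt (by positivity)
    rw [← Complex.ofReal_mul, s1, ← Complex.ofReal_mul, s2]
    have : ((m i + 1 : ℕ) : ℝ) = ((m i : ℕ) : ℝ) + 1 := by push_cast; ring
    rw [this, Complex.ofReal_add, Complex.ofReal_one, add_smul, one_smul]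

end St12

noncomputable section
open Finsupp

namespace St12

variable {n : ℕ}

lemma pos1_lt_pos2 (k : Fin (n-1)) : pos1 k < pos2 k := by
  simp [pos1, pos2, Fin.lt_def]

lemma Iio_pos2 (k : Fin (n-1)) :
    Finset.Iio (pos2 k) = insert (pos1 k) (Finset.Iio (pos1 k)) := by
  ext j
  simp only [Finset.mem_Iio, Finset.mem_insert, Fin.lt_def, Fin.ext_iff, pos1, pos2]
  omega

lemma Ioi_pos1 (k : Fin (n-1)) :
    Finset.Ioi (pos1 k) = insert (pos2 k) (Finset.Ioi (pos2 k)) := by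
  ext j
  simp only [Finset.mem_Ioi, Finset.mem_insert, Fin.lt_def, Fin.ext_iff, pos1, pos2]
  omega

lemma cγ_pos {q : ℝ} (hq0 : 0 < q) (hq1 : q < 1) (γ : Fin n → ℝ) (hγ : ∀ i, 0 < γ i)
    (i : Fin n) : 0 < cγ q γ i := by
  unfold cγ
  have h1 := Real.rpow_pos_of_pos hq0 (-(∑ j ∈ Finset.Iio i, γ j) / 2)
  have h2 := Real.rpow_pos_of_pos hq0 ((∑ j ∈ Finset.Ioi i, γ j) / 2)
  have h3 := sqrt_qnum_pos hq0 hq1 (hγ i)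
  positivity

lemma aco_pos {q : ℝ} (hq0 : 0 < q) (hq1 : q < 1) (γ : Fin n → ℝ) (hγ : ∀ i, 0 < γ i)
    (k : Fin (n-1)) : 0 < aco q γ k := by
  unfold aco
  have h1 := Real.rpow_pos_of_pos hq0 (-(γ (pos1 k)) / 2)
  have h3 := sqrt_qnum_pos hq0 hq1 (hγ (pos1 k))
  have h4 := sqrt_qnum_pos hq0 hq1 (hγ (pos2 k))
  positivity

/-- The key scalar identity making `ΔNaMinus` commute with `ON`. -/
lemma scalar_id {q : ℝ} (hq0 : 0 < q) (hq1 : q < 1) (γ : Fin n → ℝ) (hγ : ∀ i, 0 < γ i)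
    (k : Fin (n-1)) : cγ q γ (pos1 k) * aco q γ k = cγ q γ (pos2 k) * bco q γ k := by
  have hp1 : Real.sqrt (qnum q (γ (pos1 k))) ≠ 0 := (sqrt_qnum_pos hq0 hq1 (hγ _)).ne'
  have hp2 : Real.sqrt (qnum q (γ (pos2 k))) ≠ 0 := (sqrt_qnum_pos hq0 hq1 (hγ _)).ne'
  have e1 : (Real.sqrt (qnum q (γ (pos1 k))))⁻¹ * Real.sqrt (qnum q (γ (pos1 k))) = 1 :=
    inv_mul_cancel₀ hp1
  have e2 : (Real.sqrt (qnum q (γ (pos2 k))))⁻¹ * Real.sqrt (qnum q (γ (pos2 k))) = 1 :=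
    inv_mul_cancel₀ hp2
  have lhs_eq : cγ q γ (pos1 k) * aco q γ k =
      (q ^ (-(∑ j ∈ Finset.Iio (pos1 k), γ j) / 2) * q ^ ((∑ j ∈ Finset.Ioi (pos1 k), γ j) / 2)
        * q ^ (-(γ (pos1 k)) / 2)) *
      (Real.sqrt (qnum q (γ (pos1 k))) * Real.sqrt (qnum q (γ (pos2 k)))) := by
    unfold cγ aco
    field_simp
  have rhs_eq : cγ q γ (pos2 k) * bco q γ k =
      (q ^ (-(∑ j ∈ Finset.Iio (pos2 k), γ j) / 2) * q ^ ((∑ j ∈ Finset.Ioi (pos2 k), γ j) / 2)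
        * q ^ (γ (pos2 k) / 2)) *
      (Real.sqrt (qnum q (γ (pos1 k))) * Real.sqrt (qnum q (γ (pos2 k)))) := by
    unfold cγ bco
    field_simp
  rw [lhs_eq, rhs_eq]
  congr 1
  rw [← Real.rpow_add hq0, ← Real.rpow_add hq0, ← Real.rpow_add hq0, ← Real.rpow_add hq0]
  congr 1
  have hIio : ∑ j ∈ Finset.Iio (pos2 k), γ j
      = γ (pos1 k) + ∑ j ∈ Finset.Iio (pos1 k), γ j := by
    rw [Iio_pos2, Finset.sum_insert (by simp)]
  have hIoi : ∑ j ∈ Finset.Ioi (pos1 k), γ j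
      = γ (pos2 k) + ∑ j ∈ Finset.Ioi (pos2 k), γ j := by
    rw [Ioi_pos1, Finset.sum_insert (by simp)]
  rw [hIio, hIoi]
  ring

lemma LR_apply (i j : Fin n) (x : HN n) :
    L i (R j x) = R j (L i x) + (if i = j then x else 0) := by
  rcases eq_or_ne i j with rfl | hne
  · have := LinearMap.ext_iff.mp (LR_comm_self i) x
    rw [LinearMap.comp_apply, LinearMap.add_apply, LinearMap.comp_apply,
      LinearMap.id_apply] at this
    rw [this, if_pos rfl]
  · have := LinearMap.ext_iff.mp (LR_comm i j hne) x
    rw [LinearMap.comp_apply, LinearMap.comp_apply] at this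
    rw [this, if_neg hne, add_zero]

/-- `ΔNaMinus` commutes with `ON`, pointwise. -/
lemma Δ_comm_ON {q : ℝ} (hq0 : 0 < q) (hq1 : q < 1) (γ : Fin n → ℝ) (hγ : ∀ i, 0 < γ i)
    (k : Fin (n-1)) (v : HN n) :
    ΔNaMinus q γ (ON q γ k v) = ON q γ k (ΔNaMinus q γ v) := by
  set a : ℂ := ((aco q γ k : ℝ) : ℂ) with ha
  set b : ℂ := ((bco q γ k : ℝ) : ℂ) with hb
  set p : Fin n := pos1 k
  set p' : Fin n := pos2 k
  have hON : ∀ x : HN n, ON q γ k x = a • R p x - b • R p' x := by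
    intro x
    rw [ON_eq q γ k, LinearMap.sub_apply, LinearMap.smul_apply, LinearMap.smul_apply]
  have hΔ : ∀ x : HN n, ΔNaMinus q γ x = ∑ i : Fin n, (cγ q γ i : ℂ) • L i x := by
    intro x
    rw [ΔNaMinus_eq q γ, LinearMap.sum_apply]
    exact Finset.sum_congr rfl fun i _ => LinearMap.smul_apply _ _ _
  have hL : ΔNaMinus q γ (ON q γ k v)
      = ∑ i : Fin n, (cγ q γ i : ℂ) • (a • L i (R p v) - b • L i (R p' v)) := by
    rw [hON v, map_sub, map_smul, map_smul, hΔ (R p v), hΔ (R p' v),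
      Finset.smul_sum, Finset.smul_sum, ← Finset.sum_sub_distrib]
    refine Finset.sum_congr rfl fun i _ => ?_
    rw [smul_sub, smul_comm a, smul_comm b]
  have hR : ON q γ k (ΔNaMinus q γ v)
      = ∑ i : Fin n, (cγ q γ i : ℂ) • (a • R p (L i v) - b • R p' (L i v)) := by
    rw [hΔ v, map_sum]
    refine Finset.sum_congr rfl fun i _ => ?_
    rw [map_smul, hON (L i v)]
  rw [hL, hR, ← sub_eq_zero, ← Finset.sum_sub_distrib]
  have hpp' : p ≠ p' := (pos1_lt_pos2 k).ne
  have term : ∀ i : Fin n,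
      (cγ q γ i : ℂ) • (a • L i (R p v) - b • L i (R p' v))
        - (cγ q γ i : ℂ) • (a • R p (L i v) - b • R p' (L i v))
      = (if i = p then ((cγ q γ p : ℂ) * a) • v else 0)
        - (if i = p' then ((cγ q γ p' : ℂ) * b) • v else 0) := by
    intro i
    rw [LR_apply i p, LR_apply i p']
    rcases eq_or_ne i p with rfl | h1
    · rw [if_pos rfl, if_pos rfl, if_neg hpp', if_neg hpp', add_zero]
      module
    · rcases eq_or_ne i p' with rfl | h2
      · rw [if_neg h1, if_neg h1, if_pos rfl, if_pos rfl, add_zero]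
        module
      · rw [if_neg h1, if_neg h1, if_neg h2, if_neg h2, add_zero, add_zero]
        module
  rw [Finset.sum_congr rfl fun i _ => term i, Finset.sum_sub_distrib,
    Finset.sum_ite_eq' Finset.univ p (fun _ => ((cγ q γ p : ℂ) * a) • v),
    Finset.sum_ite_eq' Finset.univ p' (fun _ => ((cγ q γ p' : ℂ) * b) • v)]
  simp only [Finset.mem_univ, if_pos]
  have hs : (cγ q γ p : ℂ) * a = (cγ q γ p' : ℂ) * b := by
    rw [ha, hb, ← Complex.ofReal_mul, ← Complex.ofReal_mul, scalar_id hq0 hq1 γ hγ k]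
  rw [hs, sub_self]

end St12

noncomputable section
open Finsupp

namespace St12

variable {n : ℕ}

/-- total degree of a multi-index -/
def deg {n : ℕ} (m : Fin n → ℕ) : ℕ := ∑ i, m i

/-- weight of slot `i`: base `N+2` positional value -/
def w (N : ℕ) {n : ℕ} (i : Fin n) : ℕ := (N+2) ^ (n - 1 - i.1)

/-- weight of a multi-index: base `N+2` encoding -/
def φ (N : ℕ) {n : ℕ} (m : Fin n → ℕ) : ℕ := ∑ i, m i * w N i

lemma deg_update_add (m : Fin n → ℕ) (i : Fin n) :
    deg (Function.update m i (m i + 1)) = deg m + 1 := by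
  unfold deg
  rw [Finset.sum_update_of_mem (Finset.mem_univ i),
    Finset.sum_eq_add_sum_sdiff_singleton_of_mem (Finset.mem_univ i) (f := m)]
  omega

lemma φ_update_add (N : ℕ) (m : Fin n → ℕ) (i : Fin n) :
    φ N (Function.update m i (m i + 1)) = φ N m + w N i := by
  unfold φ
  have h1 : ∀ j : Fin n, (Function.update m i (m i + 1)) j * w N j
      = (fun j => m j * w N j) j + (if j = i then w N i else 0) := by
    intro j
    rcases eq_or_ne j i with rfl | hne
    · rw [Function.update_self, if_pos rfl]; ring
    · rw [Function.update_of_ne hne, if_neg hne, add_zero]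
  rw [Finset.sum_congr rfl fun j _ => h1 j, Finset.sum_add_distrib,
    Finset.sum_ite_eq' Finset.univ i (fun _ => w N i)]
  simp

lemma w_lt (N : ℕ) {i j : Fin n} (h : i < j) : w N j < w N i := by
  apply Nat.pow_lt_pow_right (by omega)
  have := j.isLt
  have := Fin.lt_def.mp h
  omega

lemma geo (N : ℕ) : ∀ K : ℕ, ∑ t ∈ Finset.range K, (N+1) * (N+2)^t < (N+2)^K := by
  intro K
  induction K with
  | zero => simp
  | succ K ih =>
      rw [Finset.sum_range_succ, pow_succ]
      nlinarith [pow_pos (by omega : 0 < N+2) K]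

lemma sum_Ioi_lt (N : ℕ) (m : Fin n → ℕ) (hm : ∀ j, m j ≤ N) (i : Fin n) :
    ∑ j ∈ Finset.Ioi i, m j * w N j < w N i := by
  have hle : ∑ j ∈ Finset.Ioi i, m j * w N j ≤ ∑ j ∈ Finset.Ioi i, (N+1) * w N j := by
    apply Finset.sum_le_sum
    intro j _
    exact Nat.mul_le_mul_right _ (by have := hm j; omega)
  have hni := i.isLt
  have heq : ∑ j ∈ Finset.Ioi i, (N+1) * w N j
      = ∑ t ∈ Finset.range (n - 1 - i.1), (N+1) * (N+2)^t := by
    apply Finset.sum_nbij' (i := fun (j : Fin n) => n - 1 - j.1)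
      (j := fun t => (⟨n - 1 - t, by omega⟩ : Fin n))
    · intro j hj
      rw [Finset.mem_Ioi, Fin.lt_def] at hj
      rw [Finset.mem_range]
      have := j.isLt
      omega
    · intro t ht
      rw [Finset.mem_range] at ht
      rw [Finset.mem_Ioi, Fin.lt_def]
      simp only
      omega
    · intro j hj
      rw [Finset.mem_Ioi, Fin.lt_def] at hj
      have := j.isLt
      apply Fin.ext
      simp only
      omega
    · intro t ht
      rw [Finset.mem_range] at ht
      simp only
      omega
    · intro j hj
      rw [w]
  calc ∑ j ∈ Finset.Ioi i, m j * w N j ≤ _ := hle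
    _ = _ := heq
    _ < (N+2) ^ (n - 1 - i.1) := geo N _
    _ = w N i := rfl

lemma univ_split (i : Fin n) (f : Fin n → ℕ) :
    ∑ j, f j = (∑ j ∈ Finset.Iio i, f j) + f i + ∑ j ∈ Finset.Ioi i, f j := by
  have h1 : (Finset.univ : Finset (Fin n)) = Finset.Iio i ∪ insert i (Finset.Ioi i) := by
    ext j
    simp only [Finset.mem_univ, Finset.mem_union, Finset.mem_Iio, Finset.mem_insert,
      Finset.mem_Ioi, true_iff]
    rcases lt_trichotomy j i with h | h | h
    · exact Or.inl h
    · exact Or.inr (Or.inl h)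
    · exact Or.inr (Or.inr h)
  have h2 : Disjoint (Finset.Iio i) (insert i (Finset.Ioi i)) := by
    rw [Finset.disjoint_left]
    intro a ha hb
    rw [Finset.mem_Iio] at ha
    rcases Finset.mem_insert.mp hb with rfl | hb'
    · exact absurd ha (lt_irrefl _)
    · rw [Finset.mem_Ioi] at hb'
      exact absurd (ha.trans hb') (lt_irrefl _)
  rw [h1, Finset.sum_union h2, Finset.sum_insert (by simp)]
  ring

lemma φ_lt (N : ℕ) (m m' : Fin n → ℕ) (hm : ∀ j, m j ≤ N) (i : Fin n)
    (hpre : ∀ j, j < i → m j = m' j) (hi : m i < m' i) : φ N m < φ N m' := by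
  unfold φ
  rw [univ_split i (fun j => m j * w N j), univ_split i (fun j => m' j * w N j)]
  have e1 : ∑ j ∈ Finset.Iio i, m j * w N j = ∑ j ∈ Finset.Iio i, m' j * w N j := by
    apply Finset.sum_congr rfl
    intro j hj
    rw [hpre j (Finset.mem_Iio.mp hj)]
  rw [e1]
  have e2 : ∑ j ∈ Finset.Ioi i, m j * w N j < w N i := sum_Ioi_lt N m hm i
  have e3 : m i * w N i + w N i ≤ m' i * w N i := by
    have h4 : (m i + 1) * w N i ≤ m' i * w N i := Nat.mul_le_mul_right _ hi
    rw [add_mul, one_mul] at h4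
    omega
  omega

lemma φ_inj (N : ℕ) (m m' : Fin n → ℕ) (hm : ∀ j, m j ≤ N) (hm' : ∀ j, m' j ≤ N)
    (h : φ N m = φ N m') : m = m' := by
  by_contra hne
  have hs : (Finset.univ.filter (fun j => m j ≠ m' j)).Nonempty := by
    rw [Finset.filter_nonempty_iff]
    by_contra hc
    push_neg at hc
    exact hne (funext fun j => hc j (Finset.mem_univ j))
  set i := (Finset.univ.filter (fun j => m j ≠ m' j)).min' hs with hidef
  have hmem := Finset.min'_mem _ hs
  rw [Finset.mem_filter] at hmem
  have hpre : ∀ j, j < i → m j = m' j := by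
    intro j hj
    by_contra hc
    have : i ≤ j := Finset.min'_le _ j (Finset.mem_filter.mpr ⟨Finset.mem_univ j, hc⟩)
    exact absurd (lt_of_lt_of_le hj this) (lt_irrefl _)
  rcases lt_trichotomy (m i) (m' i) with hlt | heq | hgt
  · exact absurd h (Nat.ne_of_lt (φ_lt N m m' hm i hpre hlt))
  · exact hmem.2 heq
  · exact absurd h.symm (Nat.ne_of_lt (φ_lt N m' m hm' i (fun j hj => (hpre j hj).symm) hgt))

lemma entry_le_of_deg (m : Fin n → ℕ) (N : ℕ) (hdeg : deg m = N) (i : Fin n) : m i ≤ N := by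
  rw [← hdeg]
  exact Finset.single_le_sum (fun j _ => Nat.zero_le (m j)) (Finset.mem_univ i)

lemma support_lift_subset (F : (Fin n → ℕ) → HN n) (f : HN n) :
    (Finsupp.lift (HN n) ℂ (Fin n → ℕ) F f).support
      ⊆ f.support.biUnion fun m => (F m).support := by
  intro μ hμ
  rw [Finsupp.lift_apply] at hμ
  have h1 := Finsupp.support_sum (f := f) (g := fun m (b : ℂ) => b • F m) hμ
  rw [Finset.mem_biUnion] at h1 ⊢
  obtain ⟨m, hm, hμm⟩ := h1
  exact ⟨m, hm, Finsupp.support_smul hμm⟩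

lemma R_support (i : Fin n) (f : HN n) :
    (R i f).support ⊆ f.support.biUnion fun m => {Function.update m i (m i + 1)} := by
  intro μ hμ
  have h1 := support_lift_subset _ f hμ
  rw [Finset.mem_biUnion] at h1 ⊢
  obtain ⟨m, hm, hμm⟩ := h1
  refine ⟨m, hm, ?_⟩
  have h2 := Finsupp.support_smul hμm
  have h3 := Finsupp.support_single_subset h2
  simpa using h3

lemma Δ_hN_zero (q : ℝ) (γ : Fin n → ℝ) : ΔNaMinus q γ (hN (fun _ => 0)) = 0 := by
  rw [ΔNaMinus, liftN_hN]
  simp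

end St12

noncomputable section
open Finsupp

namespace St12

variable {n : ℕ}

/-- the leading multi-index of `Omono jv v₀` -/
def mstar {n : ℕ} (jv : Fin (n-1) → ℕ) : Fin n → ℕ :=
  fun i => if h : i.1 < n-1 then jv ⟨i.1, h⟩ else 0

/-- `v` has positive leading coefficient on `hN m₀` plus lower-order degree-`d` terms -/
def Struct (N : ℕ) {n : ℕ} (d : ℕ) (m₀ : Fin n → ℕ) (v : HN n) : Prop :=
  deg m₀ = d ∧ ∃ (c : ℝ) (r : HN n), 0 < c ∧ v = (c : ℂ) • hN m₀ + r ∧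
    ∀ μ ∈ r.support, deg μ = d ∧ φ N μ < φ N m₀

lemma ON_apply (q : ℝ) (γ : Fin n → ℝ) (k : Fin (n-1)) (x : HN n) :
    ON q γ k x = ((aco q γ k : ℝ) : ℂ) • R (pos1 k) x - ((bco q γ k : ℝ) : ℂ) • R (pos2 k) x := by
  rw [ON_eq q γ k, LinearMap.sub_apply, LinearMap.smul_apply, LinearMap.smul_apply]

lemma Struct_step {q : ℝ} (hq0 : 0 < q) (hq1 : q < 1) (γ : Fin n → ℝ) (hγ : ∀ i, 0 < γ i)
    (k : Fin (n-1)) {N d : ℕ} {m₀ : Fin n → ℕ} {v : HN n} (h : Struct N d m₀ v) :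
    Struct N (d+1) (Function.update m₀ (pos1 k) (m₀ (pos1 k) + 1)) (ON q γ k v) := by
  obtain ⟨hdeg, c, r, hc, hv, hr⟩ := h
  set p : Fin n := pos1 k with hp
  set p' : Fin n := pos2 k with hp'
  set m₁ : Fin n → ℕ := Function.update m₀ p (m₀ p + 1) with hm₁
  set m₂ : Fin n → ℕ := Function.update m₀ p' (m₀ p' + 1) with hm₂
  set s1 : ℝ := Real.sqrt (m₀ p + 1) with hs1
  set s2 : ℝ := Real.sqrt (m₀ p' + 1) with hs2
  set a : ℝ := aco q γ k with ha
  set b : ℝ := bco q γ k with hb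
  set r' : HN n := (a : ℂ) • R p r - ((c * b * s2 : ℝ) : ℂ) • hN m₂ - (b : ℂ) • R p' r with hr'
  refine ⟨by rw [hm₁, deg_update_add, hdeg], c * a * s1, r', ?_, ?_, ?_⟩
  · have ha' : 0 < a := aco_pos hq0 hq1 γ hγ k
    have hs1' : 0 < s1 := Real.sqrt_pos.mpr (by positivity)
    positivity
  · rw [ON_apply, hv, map_add, map_add, map_smul, map_smul, R_hN, R_hN, ← hs1, ← hs2,
      ← hm₁, ← hm₂, hr']
    push_cast
    module
  · intro μ hμ
    have hsub : μ ∈ ((a : ℂ) • R p r).support ∪ (((c * b * s2 : ℝ) : ℂ) • hN m₂).support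
        ∪ ((b : ℂ) • R p' r).support := by
      have h1 := Finsupp.support_sub (f := (a : ℂ) • R p r - ((c * b * s2 : ℝ) : ℂ) • hN m₂)
        (g := (b : ℂ) • R p' r) hμ
      rw [Finset.mem_union] at h1
      rcases h1 with h1 | h1
      · have h2 := Finsupp.support_sub (f := (a : ℂ) • R p r)
          (g := ((c * b * s2 : ℝ) : ℂ) • hN m₂) h1
        rw [Finset.mem_union] at h2
        rcases h2 with h2 | h2
        · exact Finset.mem_union_left _ (Finset.mem_union_left _ h2)
        · exact Finset.mem_union_left _ (Finset.mem_union_right _ h2)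
      · exact Finset.mem_union_right _ h1
    have hφm₁ : φ N m₁ = φ N m₀ + w N p := φ_update_add N m₀ p
    have hwlt : w N p' < w N p := w_lt N (pos1_lt_pos2 k)
    have hRcase : ∀ (j : Fin n), w N j ≤ w N p → (∀ x ∈ r.support, True) →
        μ ∈ (R j r).support → deg μ = d + 1 ∧ φ N μ < φ N m₁ := by
      intro j hj _ hμj
      have h3 := R_support j r hμj
      rw [Finset.mem_biUnion] at h3
      obtain ⟨m, hm, hμm⟩ := h3
      rw [Finset.mem_singleton] at hμm
      subst hμm
      obtain ⟨hmd, hmφ⟩ := hr m hm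
      constructor
      · rw [deg_update_add, hmd]
      · rw [φ_update_add, hφm₁]
        omega
    rcases Finset.mem_union.mp hsub with h1 | h1
    · rcases Finset.mem_union.mp h1 with h2 | h2
      · exact hRcase p (le_refl _) (fun _ _ => trivial) (Finsupp.support_smul h2)
      · have h3 := Finsupp.support_single_subset (Finsupp.support_smul h2)
        rw [Finset.mem_singleton] at h3
        subst h3
        constructor
        · rw [hm₂, deg_update_add, hdeg]
        · rw [hm₂, φ_update_add, hφm₁]
          omega
    · exact hRcase p' (le_of_lt hwlt) (fun _ _ => trivial) (Finsupp.support_smul h1)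

/-- multiplicity vector of a word of ladder operators -/
def msum {n : ℕ} (L : List (Fin (n-1))) : Fin n → ℕ := fun i => (L.map pos1).count i

lemma msum_nil : msum ([] : List (Fin (n-1))) = fun _ => (0:ℕ) := by
  funext i; simp [msum]

lemma msum_cons (a : Fin (n-1)) (L : List (Fin (n-1))) :
    msum (a :: L) = Function.update (msum L) (pos1 a) (msum L (pos1 a) + 1) := by
  funext i
  rcases eq_or_ne i (pos1 a) with rfl | hne
  · rw [Function.update_self, msum, msum, List.map_cons, List.count_cons_self]
  · rw [Function.update_of_ne hne, msum, msum, List.map_cons,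
      List.count_cons_of_ne (by simpa using hne.symm)]

lemma Struct_list {q : ℝ} (hq0 : 0 < q) (hq1 : q < 1) (γ : Fin n → ℝ) (hγ : ∀ i, 0 < γ i)
    (N : ℕ) : ∀ L : List (Fin (n-1)),
    Struct N L.length (msum L) (((L.map (ON q γ)).prod) (hN (fun _ => 0))) := by
  intro L
  induction L with
  | nil =>
      rw [List.map_nil, List.prod_nil, msum_nil]
      refine ⟨by simp [deg], 1, 0, one_pos, ?_, by simp⟩
      simp [Module.End.one_apply]
  | cons a L ih =>
      rw [List.map_cons, List.prod_cons, Module.End.mul_apply, msum_cons]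
      exact Struct_step hq0 hq1 γ hγ a ih

lemma ker_list {q : ℝ} (hq0 : 0 < q) (hq1 : q < 1) (γ : Fin n → ℝ) (hγ : ∀ i, 0 < γ i) :
    ∀ L : List (Fin (n-1)),
    ΔNaMinus q γ (((L.map (ON q γ)).prod) (hN (fun _ => 0))) = 0 := by
  intro L
  induction L with
  | nil =>
      rw [List.map_nil, List.prod_nil]
      simpa [Module.End.one_apply] using Δ_hN_zero q γ
  | cons a L ih =>
      rw [List.map_cons, List.prod_cons, Module.End.mul_apply,
        Δ_comm_ON hq0 hq1 γ hγ a, ih, map_zero]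

/-- the flattened word corresponding to the monomial `jv` -/
def flat {n : ℕ} (jv : Fin (n-1) → ℕ) : List (Fin (n-1)) :=
  (List.ofFn fun k => List.replicate (jv k) k).flatten

lemma Omono_eq_list (q : ℝ) (γ : Fin n → ℝ) (jv : Fin (n-1) → ℕ) :
    Omono q γ jv = ((flat jv).map (ON q γ)).prod := by
  rw [Omono, flat, List.map_flatten, List.map_ofFn, List.prod_flatten, List.map_ofFn]
  refine congrArg List.prod (congrArg List.ofFn (funext fun k => ?_))
  simp only [Function.comp_apply, List.map_replicate, List.prod_replicate]

lemma flat_length (jv : Fin (n-1) → ℕ) : (flat jv).length = ∑ k, jv k := by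
  rw [flat, List.length_flatten, List.map_ofFn, List.sum_ofFn]
  exact Finset.sum_congr rfl fun k _ => by simp

lemma msum_flat (jv : Fin (n-1) → ℕ) : msum (flat jv) = mstar jv := by
  funext i
  rw [msum, flat, List.map_flatten, List.count_flatten, List.map_ofFn, List.map_ofFn]
  have hterm : ∀ k : Fin (n-1),
      (List.count i ∘ List.map pos1 ∘ fun k => List.replicate (jv k) k) k
        = if pos1 k = i then jv k else 0 := by
    intro k
    simp only [Function.comp_apply, List.map_replicate, List.count_replicate]
    rcases eq_or_ne (pos1 k) i with he | hne
    · rw [if_pos he, if_pos]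
      exact beq_iff_eq.mpr he
    · rw [if_neg hne, if_neg]
      simpa using fun hc => hne hc
  rw [List.sum_ofFn, Finset.sum_congr rfl (fun k _ => hterm k), mstar]
  rcases Nat.lt_or_ge i.1 (n-1) with hlt | hge
  · rw [dif_pos hlt]
    rw [Finset.sum_eq_single (⟨i.1, hlt⟩ : Fin (n-1))]
    · rw [if_pos (by apply Fin.ext; simp [pos1])]
    · intro k _ hk
      rw [if_neg]
      intro hc
      exact hk (by apply Fin.ext; simpa [pos1, Fin.ext_iff] using hc)
    · intro hc
      exact absurd (Finset.mem_univ _) hc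
  · rw [dif_neg (by omega)]
    apply Finset.sum_eq_zero
    intro k _
    rw [if_neg]
    intro hc
    have := k.isLt
    rw [Fin.ext_iff] at hc
    simp only [pos1] at hc
    omega

lemma Omono_struct {q : ℝ} (hq0 : 0 < q) (hq1 : q < 1) (γ : Fin n → ℝ) (hγ : ∀ i, 0 < γ i)
    (N : ℕ) (jv : Fin (n-1) → ℕ) :
    Struct N (∑ k, jv k) (mstar jv) (Omono q γ jv (hN (fun _ => 0))) := by
  have := Struct_list hq0 hq1 γ hγ N (flat jv)
  rwa [flat_length, msum_flat, ← Omono_eq_list] at this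

lemma Omono_ker {q : ℝ} (hq0 : 0 < q) (hq1 : q < 1) (γ : Fin n → ℝ) (hγ : ∀ i, 0 < γ i)
    (jv : Fin (n-1) → ℕ) :
    ΔNaMinus q γ (Omono q γ jv (hN (fun _ => 0))) = 0 := by
  rw [Omono_eq_list]
  exact ker_list hq0 hq1 γ hγ (flat jv)

end St12

noncomputable section
open Finsupp

namespace St12

variable {n : ℕ}

lemma L_apply_coord (i : Fin n) (f : HN n) (μ : Fin n → ℕ) :
    (L i f) μ = (Real.sqrt (μ i + 1) : ℂ) * f (Function.update μ i (μ i + 1)) := by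
  induction f using Finsupp.induction_linear with
  | zero => simp
  | add f g hf hg =>
      rw [map_add, Finsupp.add_apply, Finsupp.add_apply, hf, hg]
      ring
  | single m b =>
      rw [L, liftN_single]
      rw [Finsupp.smul_apply, Finsupp.smul_apply]
      rcases eq_or_ne m (Function.update μ i (μ i + 1)) with rfl | hne
      · have h1 : Function.update μ i (μ i + 1) i = μ i + 1 := Function.update_self _ _ _
        have h2 : Function.update (Function.update μ i (μ i + 1)) i
            (Function.update μ i (μ i + 1) i - 1) = μ := by
          funext j
          rcases eq_or_ne j i with rfl | hj
          · simp
          · simp [Function.update_of_ne hj]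
        rw [h2, Finsupp.single_eq_same, hN, Finsupp.single_eq_same, h1]
        rw [smul_eq_mul, smul_eq_mul, mul_one]
        push_cast
        ring
      · rw [Finsupp.single_eq_of_ne' hne, mul_zero]
        rcases Nat.eq_zero_or_pos (m i) with h0 | hpos
        · rw [h0]
          simp
        · have : hN (Function.update m i (m i - 1)) μ = 0 := by
            rw [hN, Finsupp.single_eq_of_ne']
            intro hc
            apply hne
            funext j
            rcases eq_or_ne j i with rfl | hj
            · have := congrFun hc j
              rw [Function.update_self] at this
              rw [Function.update_self]
              omega
            · have := congrFun hc j
              rw [Function.update_of_ne hj] at this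
              rw [Function.update_of_ne hj, ← this]
          rw [this, smul_zero, smul_zero]

lemma Δ_coord (q : ℝ) (γ : Fin n → ℝ) (f : HN n) (μ : Fin n → ℕ) :
    ΔNaMinus q γ f μ = ∑ i : Fin n,
      (cγ q γ i : ℂ) * (Real.sqrt (μ i + 1) : ℂ) * f (Function.update μ i (μ i + 1)) := by
  rw [ΔNaMinus_eq, LinearMap.sum_apply, Finsupp.finset_sum_apply]
  refine Finset.sum_congr rfl fun i _ => ?_
  rw [LinearMap.smul_apply, Finsupp.smul_apply, L_apply_coord, smul_eq_mul, mul_assoc]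

/-- the φ-maximal element of the support of a lowest-weight vector has last slot `0` -/
lemma last_coord_zero {q : ℝ} (hq0 : 0 < q) (hq1 : q < 1) (γ : Fin n → ℝ)
    (hγ : ∀ i, 0 < γ i) (hn : 2 ≤ n) {N : ℕ} (f : HN n)
    (hker : ΔNaMinus q γ f = 0) (m₀ : Fin n → ℕ) (hm₀ : m₀ ∈ f.support)
    (hmax : ∀ m ∈ f.support, φ N m ≤ φ N m₀) :
    m₀ ⟨n-1, by omega⟩ = 0 := by
  set last : Fin n := ⟨n-1, by omega⟩ with hlast
  by_contra h0
  have hpos : 1 ≤ m₀ last := Nat.one_le_iff_ne_zero.mpr h0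
  set μ : Fin n → ℕ := Function.update m₀ last (m₀ last - 1) with hμ
  have hμlast : μ last = m₀ last - 1 := Function.update_self _ _ _
  have hrecon : Function.update μ last (μ last + 1) = m₀ := by
    funext j
    rcases eq_or_ne j last with rfl | hj
    · rw [Function.update_self, hμlast]
      omega
    · rw [Function.update_of_ne hj, hμ, Function.update_of_ne hj]
  have hzero : ΔNaMinus q γ f μ = 0 := by rw [hker]; rfl
  rw [Δ_coord] at hzero
  have hφm₀ : φ N m₀ = φ N μ + w N last := by
    rw [← hrecon, φ_update_add]
  have hvanish : ∀ i : Fin n, i ≠ last →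
      f (Function.update μ i (μ i + 1)) = 0 := by
    intro i hi
    by_contra hc
    have hmem : Function.update μ i (μ i + 1) ∈ f.support := Finsupp.mem_support_iff.mpr hc
    have hle := hmax _ hmem
    rw [φ_update_add, hφm₀] at hle
    have hwlt : w N last < w N i := by
      apply w_lt
      rw [Fin.lt_def, hlast]
      have h1 := i.isLt
      have h2 : i.1 ≠ n - 1 := fun hc' => hi (Fin.ext hc')
      simp only
      omega
    omega
  rw [Finset.sum_eq_single last (fun i _ hi => by rw [hvanish i hi, mul_zero])
    (fun hc => absurd (Finset.mem_univ _) hc), hrecon] at hzero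
  have hcne : (cγ q γ last : ℂ) ≠ 0 :=
    Complex.ofReal_ne_zero.mpr (cγ_pos hq0 hq1 γ hγ last).ne'
  have hsne : ((Real.sqrt (μ last + 1) : ℝ) : ℂ) ≠ 0 :=
    Complex.ofReal_ne_zero.mpr (Real.sqrt_pos.mpr (by positivity)).ne'
  have hfm₀ : f m₀ ≠ 0 := Finsupp.mem_support_iff.mp hm₀
  exact hfm₀ (by
    have := mul_eq_zero.mp hzero
    rcases this with h | h
    · rcases mul_eq_zero.mp h with h' | h'
      · exact absurd h' hcne
      · exact absurd h' hsne
    · exact h)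

end St12

noncomputable section
open Finsupp

namespace St12

variable {k : ℕ}

lemma count_sum_singleton (m : Fin k → ℕ) (i : Fin k) :
    Multiset.count i (∑ j : Fin k, m j • ({j} : Multiset (Fin k))) = m i := by
  rw [Multiset.count_sum']
  have h1 : ∀ j : Fin k, Multiset.count i (m j • ({j} : Multiset (Fin k)))
      = if i = j then m j else 0 := by
    intro j
    rw [Multiset.count_nsmul, Multiset.count_singleton]
    rcases eq_or_ne i j with rfl | hne
    · simp
    · simp [hne]
  rw [Finset.sum_congr rfl fun j _ => h1 j, Finset.sum_ite_eq Finset.univ i (fun j => m j)]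
  simp

lemma sum_count_singleton (s : Multiset (Fin k)) :
    ∑ i : Fin k, s.count i • ({i} : Multiset (Fin k)) = s := by
  rw [← Finset.sum_subset (Finset.subset_univ s.toFinset)
    (fun x _ hx => by
      rw [Multiset.count_eq_zero_of_notMem (by simpa using hx), zero_smul])]
  exact Multiset.toFinset_sum_count_nsmul_eq s

lemma sum_count_eq_card (s : Multiset (Fin k)) :
    ∑ i : Fin k, s.count i = Multiset.card s := by
  rw [← Finset.sum_subset (Finset.subset_univ s.toFinset)
    (fun x _ hx => Multiset.count_eq_zero_of_notMem (by simpa using hx))]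
  exact Multiset.toFinset_sum_count_eq s

/-- compositions of `N` into `k` parts are equivalent to multisets of size `N` over `Fin k` -/
def compEquivSym (k N : ℕ) : {jv : Fin k → ℕ // ∑ i, jv i = N} ≃ Sym (Fin k) N where
  toFun a := ⟨∑ j : Fin k, a.1 j • ({j} : Multiset (Fin k)), by
    rw [Multiset.card_sum]
    calc ∑ j : Fin k, Multiset.card (a.1 j • ({j} : Multiset (Fin k)))
        = ∑ j : Fin k, a.1 j := by
          refine Finset.sum_congr rfl fun j _ => ?_
          rw [Multiset.card_nsmul, Multiset.card_singleton, mul_one]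
      _ = N := a.2⟩
  invFun s := ⟨fun i => Multiset.count i s.1, by
    rw [sum_count_eq_card]
    exact s.2⟩
  left_inv a := by
    apply Subtype.ext
    funext i
    exact count_sum_singleton a.1 i
  right_inv s := by
    apply Subtype.ext
    exact sum_count_singleton s.1

lemma card_comp (k N : ℕ) :
    letI : Fintype {jv : Fin k → ℕ // ∑ i, jv i = N} :=
      Fintype.subtype (Finset.Nat.antidiagonalTuple k N)
        (fun x => Finset.Nat.mem_antidiagonalTuple)
    Fintype.card {jv : Fin k → ℕ // ∑ i, jv i = N} = (k + N - 1).choose N := by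
  letI : Fintype {jv : Fin k → ℕ // ∑ i, jv i = N} :=
    Fintype.subtype (Finset.Nat.antidiagonalTuple k N)
      (fun x => Finset.Nat.mem_antidiagonalTuple)
  rw [Fintype.card_congr (compEquivSym k N), Sym.card_sym_eq_choose, Fintype.card_fin]

end St12

noncomputable section
open Finsupp

namespace St12

variable {n : ℕ}

/-- the generating set of the lowest weight space -/
def Sset (q : ℝ) {n : ℕ} (γ : Fin n → ℝ) (N : ℕ) : Set (HN n) :=
  {x | ∃ jv : Fin (n-1) → ℕ, (∑ k, jv k = N) ∧ x = Omono q γ jv (hN fun _ => 0)}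

lemma mstar_at_pos1 (jv : Fin (n-1) → ℕ) (k : Fin (n-1)) : mstar jv (pos1 k) = jv k := by
  rw [mstar, dif_pos (show ((pos1 k : Fin n) : ℕ) < n - 1 from k.isLt)]
  congr 1

lemma mstar_inj : Function.Injective (mstar (n := n)) := by
  intro a b h
  funext kk
  rw [← mstar_at_pos1 a kk, ← mstar_at_pos1 b kk, h]

lemma mstar_entry_le (jv : Fin (n-1) → ℕ) (N : ℕ) (hjv : ∑ kk, jv kk = N) (i : Fin n) :
    mstar jv i ≤ N := by
  rw [mstar]
  rcases Nat.lt_or_ge i.1 (n-1) with hlt | hge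
  · rw [dif_pos hlt]
    rw [← hjv]
    exact Finset.single_le_sum (fun j _ => Nat.zero_le _) (Finset.mem_univ _)
  · rw [dif_neg (by omega)]
    exact Nat.zero_le _

lemma Omono_supp {q : ℝ} (hq0 : 0 < q) (hq1 : q < 1) (γ : Fin n → ℝ) (hγ : ∀ i, 0 < γ i)
    (N : ℕ) (jv : Fin (n-1) → ℕ) (hjv : ∑ kk, jv kk = N) :
    ∀ m ∈ (Omono q γ jv (hN fun _ => 0)).support, deg m = N := by
  obtain ⟨hdeg, c, r, hc, hv, hr⟩ := Omono_struct hq0 hq1 γ hγ N jv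
  intro m hm
  rw [hv] at hm
  rcases Finset.mem_union.mp (Finsupp.support_add hm) with h1 | h1
  · have h2 := Finsupp.support_single_subset (Finsupp.support_smul h1)
    rw [Finset.mem_singleton] at h2
    rw [h2, hdeg, hjv]
  · rw [(hr m h1).1, hjv]

/-- The family of lowest weight vectors is linearly independent. -/
lemma Omono_indep {q : ℝ} (hq0 : 0 < q) (hq1 : q < 1) (γ : Fin n → ℝ) (hγ : ∀ i, 0 < γ i)
    (N : ℕ) :
    LinearIndependent ℂ (fun a : {jv : Fin (n-1) → ℕ // ∑ kk, jv kk = N} =>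
      Omono q γ a.1 (hN fun _ => 0)) := by
  rw [linearIndependent_iff']
  intro s g hsum i hi
  by_contra hgi
  set t := s.filter (fun a => g a ≠ 0) with ht
  have htne : t.Nonempty := ⟨i, Finset.mem_filter.mpr ⟨hi, hgi⟩⟩
  obtain ⟨a₀, ha₀t, hsup⟩ := Finset.exists_mem_eq_sup t htne
    (fun a => φ N (mstar a.1))
  have hmax : ∀ a ∈ t, φ N (mstar a.1) ≤ φ N (mstar a₀.1) := fun a ha =>
    le_of_le_of_eq (Finset.le_sup (f := fun a => φ N (mstar a.1)) ha) hsup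
  -- coordinate of each vector at mstar a₀
  have hcoord : ∀ a ∈ t, a ≠ a₀ →
      (Omono q γ a.1 (hN fun _ => 0)) (mstar a₀.1) = 0 := by
    intro a ha hne
    obtain ⟨hdeg, c, r, hc, hv, hr⟩ := Omono_struct hq0 hq1 γ hγ N a.1
    rw [hv, Finsupp.add_apply, Finsupp.smul_apply, hN]
    have h1 : mstar a.1 ≠ mstar a₀.1 := by
      intro hc'
      exact hne (Subtype.ext (mstar_inj hc'))
    rw [Finsupp.single_eq_of_ne' h1, smul_zero, zero_add]
    by_contra hc'
    have h2 := (hr _ (Finsupp.mem_support_iff.mpr hc')).2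
    have h3 := hmax a ha
    exact absurd (lt_of_le_of_lt h3 h2) (lt_irrefl _)
  obtain ⟨hdeg₀, c₀, r₀, hc₀, hv₀, hr₀⟩ := Omono_struct hq0 hq1 γ hγ N a₀.1
  have hcoord₀ : (Omono q γ a₀.1 (hN fun _ => 0)) (mstar a₀.1) = (c₀ : ℂ) := by
    rw [hv₀, Finsupp.add_apply, Finsupp.smul_apply, hN, Finsupp.single_eq_same]
    have hr0 : r₀ (mstar a₀.1) = 0 := by
      by_contra hc'
      exact absurd ((hr₀ _ (Finsupp.mem_support_iff.mpr hc')).2) (lt_irrefl _)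
    rw [hr0, add_zero, smul_eq_mul, mul_one]
  have heval : ∑ a ∈ s, g a * (Omono q γ a.1 (hN fun _ => 0)) (mstar a₀.1) = (0 : ℂ) := by
    calc ∑ a ∈ s, g a * (Omono q γ a.1 (hN fun _ => 0)) (mstar a₀.1)
        = ∑ a ∈ s, (g a • Omono q γ a.1 (hN fun _ => 0)) (mstar a₀.1) :=
          Finset.sum_congr rfl fun a _ => by rw [Finsupp.smul_apply, smul_eq_mul]
      _ = (∑ a ∈ s, g a • Omono q γ a.1 (hN fun _ => 0)) (mstar a₀.1) :=
          (Finsupp.finset_sum_apply _ _ _).symm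
      _ = 0 := by rw [hsum]; rfl
  have hsplit : ∑ a ∈ s, g a * (Omono q γ a.1 (hN fun _ => 0)) (mstar a₀.1)
      = g a₀ * (c₀ : ℂ) := by
    rw [Finset.sum_eq_single_of_mem a₀ (Finset.mem_filter.mp ha₀t).1]
    · rw [hcoord₀]
    · intro a ha hne
      rcases eq_or_ne (g a) 0 with h | h
      · rw [h, zero_mul]
      · rw [hcoord a (Finset.mem_filter.mpr ⟨ha, h⟩) hne, mul_zero]
  rw [hsplit] at heval
  have hgne : g a₀ ≠ 0 := (Finset.mem_filter.mp ha₀t).2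
  have hcne : (c₀ : ℂ) ≠ 0 := Complex.ofReal_ne_zero.mpr hc₀.ne'
  exact (mul_ne_zero hgne hcne) heval

/-- Every lowest weight vector of level `N` lies in the span of the `Omono` vectors. -/
lemma span_aux {q : ℝ} (hq0 : 0 < q) (hq1 : q < 1) (γ : Fin n → ℝ) (hγ : ∀ i, 0 < γ i)
    (hn : 2 ≤ n) (N : ℕ) :
    ∀ (M : ℕ) (f : HN n), ΔNaMinus q γ f = 0 → (∀ m ∈ f.support, deg m = N) →
      f.support.sup (φ N) ≤ M → f ∈ Submodule.span ℂ (Sset q γ N) := by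
  intro M
  induction M using Nat.strong_induction_on with
  | _ M ih =>
  intro f hker hsupp hsupM
  rcases eq_or_ne f 0 with rfl | hf0
  · exact Submodule.zero_mem _
  obtain ⟨m₀, hm₀, hsupeq⟩ := Finset.exists_mem_eq_sup f.support
    (Finsupp.support_nonempty_iff.mpr hf0) (φ N)
  have hmax : ∀ m ∈ f.support, φ N m ≤ φ N m₀ := fun m hm => hsupeq ▸ Finset.le_sup hm
  have hlast := last_coord_zero hq0 hq1 γ hγ hn f hker m₀ hm₀ hmax
  set jv : Fin (n-1) → ℕ := fun kk => m₀ (pos1 kk) with hjvdef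
  have hms : mstar jv = m₀ := by
    funext i
    rw [mstar]
    rcases Nat.lt_or_ge i.1 (n-1) with hlt | hge
    · rw [dif_pos hlt, hjvdef]
      congr 1
    · rw [dif_neg (by omega)]
      have hieq : i = ⟨n-1, by omega⟩ := by
        apply Fin.ext
        have := i.isLt
        simp only
        omega
      rw [hieq, hlast]
  obtain ⟨hdeg, c, r, hc, hveq, hr⟩ := Omono_struct hq0 hq1 γ hγ N jv
  rw [hms] at hdeg hveq hr
  have hsum : ∑ kk, jv kk = N := hdeg.symm.trans (hsupp m₀ hm₀)
  set u := Omono q γ jv (hN fun _ => 0) with hu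
  have hcℂ : (c : ℂ) ≠ 0 := Complex.ofReal_ne_zero.mpr hc.ne'
  have hrm₀ : r m₀ = 0 := by
    by_contra hc'
    exact absurd ((hr m₀ (Finsupp.mem_support_iff.mpr hc')).2) (lt_irrefl _)
  have hum₀ : u m₀ = (c : ℂ) := by
    rw [hveq, Finsupp.add_apply, Finsupp.smul_apply, hN, Finsupp.single_eq_same, hrm₀,
      add_zero, smul_eq_mul, mul_one]
  set g : HN n := f - (f m₀ / (c : ℂ)) • u with hg
  have hgker : ΔNaMinus q γ g = 0 := by
    rw [hg, map_sub, map_smul, hker, hu, Omono_ker hq0 hq1 γ hγ, smul_zero, sub_zero]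
  have husupp : ∀ m ∈ u.support, deg m = N :=
    Omono_supp hq0 hq1 γ hγ N jv hsum
  have hgsupp : ∀ m ∈ g.support, deg m = N := by
    intro m hm
    rw [hg] at hm
    rcases Finset.mem_union.mp (Finsupp.support_sub hm) with h1 | h1
    · exact hsupp m h1
    · exact husupp m (Finsupp.support_smul h1)
  have hgm₀ : g m₀ = 0 := by
    rw [hg, Finsupp.sub_apply, Finsupp.smul_apply, hum₀, smul_eq_mul,
      div_mul_cancel₀ _ hcℂ, sub_self]
  have huφ : ∀ m ∈ u.support, φ N m ≤ φ N m₀ := by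
    intro m hm
    rw [hveq] at hm
    rcases Finset.mem_union.mp (Finsupp.support_add hm) with h1 | h1
    · have h2 := Finsupp.support_single_subset (Finsupp.support_smul h1)
      rw [Finset.mem_singleton] at h2
      rw [h2]
    · exact (hr m h1).2.le
  have hgφ : ∀ m ∈ g.support, φ N m < φ N m₀ := by
    intro m hm
    have hdm : deg m = N := hgsupp m hm
    have hle : φ N m ≤ φ N m₀ := by
      rw [hg] at hm
      rcases Finset.mem_union.mp (Finsupp.support_sub hm) with h1 | h1
      · exact hmax m h1
      · exact huφ m (Finsupp.support_smul h1)
    rcases lt_or_eq_of_le hle with hlt | heq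
    · exact hlt
    · exfalso
      have hmm : m = m₀ := φ_inj N m m₀ (entry_le_of_deg m N hdm)
        (entry_le_of_deg m₀ N (hsupp m₀ hm₀)) heq
      rw [hmm] at hm
      exact (Finsupp.mem_support_iff.mp hm) hgm₀
  have hu_mem : u ∈ Submodule.span ℂ (Sset q γ N) :=
    Submodule.subset_span ⟨jv, hsum, hu⟩
  have hg_mem : g ∈ Submodule.span ℂ (Sset q γ N) := by
    rcases eq_or_ne g 0 with h | h
    · rw [h]; exact Submodule.zero_mem _
    · obtain ⟨m₁, hm₁, hsupg⟩ := Finset.exists_mem_eq_sup g.support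
        (Finsupp.support_nonempty_iff.mpr h) (φ N)
      refine ih (g.support.sup (φ N)) ?_ g hgker hgsupp (le_refl _)
      calc g.support.sup (φ N) = φ N m₁ := hsupg
        _ < φ N m₀ := hgφ m₁ hm₁
        _ = f.support.sup (φ N) := hsupeq.symm
        _ ≤ M := hsupM
  have hfeq : f = g + (f m₀ / (c : ℂ)) • u := by
    rw [hg, sub_add_cancel]
  rw [hfeq]
  exact Submodule.add_mem _ hg_mem (Submodule.smul_mem _ _ hu_mem)

end St12

open Finsupp St12

/-- the lowest weight space of level `N`,
`ker(Δ^{(n)}a⁻) ∩ span{h_{m₁} ⊗ ⋯ ⊗ h_{m_n} : Σ mᵢ = N}`, equals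
`span{O₁^{j₁} O₂^{j₂} ⋯ O_{n−1}^{j_{n−1}} v₀ : Σ jᵢ = N}`, and its dimension is
`binom(n+N−2, n−2)`. -/
theorem stmt12 (n N : ℕ) (hn : 2 ≤ n) (q : ℝ) (γ : Fin n → ℝ) (c : Fin n → ℝ)
    (hq0 : 0 < q) (hq1 : q < 1) (hγ : ∀ i, 0 < γ i) :
    LinearMap.ker (ΔNaMinus q γ) ⊓
        Submodule.span ℂ {x : HN n | ∃ m : Fin n → ℕ, ∑ i, m i = N ∧ x = hN m} =
      Submodule.span ℂ
        {x : HN n | ∃ jv : Fin (n - 1) → ℕ, ∑ k, jv k = N ∧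
          x = Omono q γ jv (hN fun _ => 0)} ∧
    Module.finrank ℂ
        ↥(LinearMap.ker (ΔNaMinus q γ) ⊓
          Submodule.span ℂ {x : HN n | ∃ m : Fin n → ℕ, ∑ i, m i = N ∧ x = hN m}) =
      (n + N - 2).choose (n - 2) := by
  have h1 : n - 1 + N - 1 = n + N - 2 := by omega
  have h2 : N ≤ n + N - 2 := by omega
  have h4 : n + N - 2 - N = n - 2 := by omega
  have harith : (n - 1 + N - 1).choose N = (n + N - 2).choose (n - 2) := by
    rw [h1, ← Nat.choose_symm h2, h4]
  set Sv : Set (HN n) := {x : HN n | ∃ m : Fin n → ℕ, ∑ i, m i = N ∧ x = hN m} with hSvdef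
  have hSv : Sv = (fun m => Finsupp.single m (1:ℂ)) '' {m : Fin n → ℕ | deg m = N} := by
    ext x
    simp only [hSvdef, Set.mem_setOf_eq, Set.mem_image]
    constructor
    · rintro ⟨m, h1, h2⟩
      exact ⟨m, h1, h2.symm⟩
    · rintro ⟨m, h1, h2⟩
      exact ⟨m, h1, h2.symm⟩
  have hspanV : Submodule.span ℂ Sv = Finsupp.supported ℂ ℂ {m : Fin n → ℕ | deg m = N} := by
    rw [hSv]
    exact (Finsupp.supported_eq_span_single ℂ _).symm
  have hmemV : ∀ f : HN n, f ∈ Submodule.span ℂ Sv ↔ ∀ m ∈ f.support, deg m = N := by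
    intro f
    rw [hspanV, Finsupp.mem_supported]
    constructor
    · intro h m hm
      exact h hm
    · intro h m hm
      exact h m hm
  have hpart1 : LinearMap.ker (ΔNaMinus q γ) ⊓ Submodule.span ℂ Sv
      = Submodule.span ℂ (Sset q γ N) := by
    apply le_antisymm
    · intro x hx
      obtain ⟨hker, hsup⟩ := Submodule.mem_inf.mp hx
      exact span_aux hq0 hq1 γ hγ hn N (x.support.sup (φ N)) x
        (LinearMap.mem_ker.mp hker) ((hmemV x).mp hsup) (le_refl _)
    · rw [Submodule.span_le]
      rintro x ⟨jv, hjv, rfl⟩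
      exact Submodule.mem_inf.mpr
        ⟨LinearMap.mem_ker.mpr (Omono_ker hq0 hq1 γ hγ jv),
         (hmemV _).mpr (Omono_supp hq0 hq1 γ hγ N jv hjv)⟩
  have hsets : {x : HN n | ∃ jv : Fin (n - 1) → ℕ, ∑ k, jv k = N ∧
      x = Omono q γ jv (hN fun _ => 0)} = Sset q γ N := rfl
  constructor
  · rw [hsets]
    exact hpart1
  · letI : Fintype {jv : Fin (n-1) → ℕ // ∑ kk, jv kk = N} :=
      Fintype.subtype (Finset.Nat.antidiagonalTuple (n-1) N)
        (fun x => Finset.Nat.mem_antidiagonalTuple)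
    set vfam : {jv : Fin (n-1) → ℕ // ∑ kk, jv kk = N} → HN n :=
      fun a => Omono q γ a.1 (hN fun _ => 0) with hvfam
    have hrange : Sset q γ N = Set.range vfam := by
      ext x
      constructor
      · rintro ⟨jv, hjv, rfl⟩
        exact ⟨⟨jv, hjv⟩, rfl⟩
      · rintro ⟨a, rfl⟩
        exact ⟨a.1, a.2, rfl⟩
    have e1 : LinearMap.ker (ΔNaMinus q γ) ⊓ Submodule.span ℂ Sv
        = Submodule.span ℂ (Set.range vfam) := by
      rw [hpart1, hrange]
    have e2 : Module.finrank ℂ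
        ↥(LinearMap.ker (ΔNaMinus q γ) ⊓ Submodule.span ℂ Sv)
        = Fintype.card {jv : Fin (n-1) → ℕ // ∑ kk, jv kk = N} := by
      rw [e1]
      exact finrank_span_eq_card (Omono_indep hq0 hq1 γ hγ N)
    have hcard := card_comp (n-1) N
    rw [e2, hcard, harith]
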